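/- Let h_{i,k} = (k/(2i−k))·binom(2i−k, i) for i ≥ k ≥ 1, and let C_n denote the n-th Catalan number. Then for all i ≥ k ≥ 1: C_{i−1}·h_{i+1,k} − C_i·h_{i,k} = k(k−1)(k−2)·(2i−2)!·(2i−k−1)! / ((i+1)!·i!·(i−1)!·(i−k+1)!). In particular, C_{i−1}·h_{i+1,k} ≥ C_i·h_{i,k}. -/
import Mathlib


open Nat

/-- The `n`-th Catalan number as a rational, `C n = binom(2n, n)/(n+1)`. -/
noncomputable def catalanQ (n : ℕ) : ℚ := ((2 * n).choose n : ℚ) / (n + 1)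

/-- `h i k` is the number of 132-avoiding permutations of length `i` with exactly `k`
skew indecomposable components: `h i k = (k/(2i-k)) * binom(2i-k, i)`. -/
noncomputable def hQ (i k : ℕ) : ℚ := (k : ℚ) / (2 * i - k) * ((2 * i - k).choose i : ℚ)

set_option maxHeartbeats 1600000 in
theorem stmt_11 (i k : ℕ) (hk : 1 ≤ k) (hki : k ≤ i) :
    catalanQ (i - 1) * hQ (i + 1) k - catalanQ i * hQ i k =
      ((k : ℚ) * (k - 1) * (k - 2) * (2 * i - 2)! * (2 * i - k - 1)!) /
        ((i + 1)! * i ! * (i - 1)! * (i - k + 1)!) ∧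
    catalanQ i * hQ i k ≤ catalanQ (i - 1) * hQ (i + 1) k := by
  obtain ⟨c, rfl⟩ : ∃ c, k = c + 1 := ⟨k - 1, by omega⟩
  obtain ⟨j, rfl⟩ : ∃ j, i = c + 1 + j := ⟨i - (c + 1), by omega⟩
  simp only [catalanQ, hQ]
  rw [show c + 1 + j - 1 = c + j from by omega,
      show 2 * (c + 1 + j + 1) - (c + 1) = c + 2 * j + 3 from by omega,
      show 2 * (c + 1 + j) - (c + 1) = c + 2 * j + 1 from by omega,
      show 2 * (c + 1 + j) - 2 = 2 * (c + j) from by omega,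
      show c + 2 * j + 1 - 1 = c + 2 * j from by omega,
      show c + 1 + j - (c + 1) + 1 = j + 1 from by omega]
  have hch1 : (((2 * (c + j)).choose (c + j)) : ℚ)
      = ((2 * (c + j))! : ℚ) / (((c + j)! : ℚ) * ((c + j)! : ℚ)) := by
    rw [Nat.cast_choose ℚ (by omega), show 2 * (c + j) - (c + j) = c + j from by omega]
  have hch2 : (((2 * (c + 1 + j)).choose (c + 1 + j)) : ℚ)
      = ((2 * (c + 1 + j))! : ℚ) / (((c + 1 + j)! : ℚ) * ((c + 1 + j)! : ℚ)) := by
    rw [Nat.cast_choose ℚ (by omega),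
      show 2 * (c + 1 + j) - (c + 1 + j) = c + 1 + j from by omega]
  have hch3 : (((c + 2 * j + 3).choose (c + 1 + j + 1)) : ℚ)
      = ((c + 2 * j + 3)! : ℚ) / (((c + 1 + j + 1)! : ℚ) * ((j + 1)! : ℚ)) := by
    rw [Nat.cast_choose ℚ (by omega),
      show c + 2 * j + 3 - (c + 1 + j + 1) = j + 1 from by omega]
  have hch4 : (((c + 2 * j + 1).choose (c + 1 + j)) : ℚ)
      = ((c + 2 * j + 1)! : ℚ) / (((c + 1 + j)! : ℚ) * ((j)! : ℚ)) := by
    rw [Nat.cast_choose ℚ (by omega),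
      show c + 2 * j + 1 - (c + 1 + j) = j from by omega]
  have r1 : ((2 * (c + 1 + j))! : ℚ)
      = (2 * ((c : ℚ) + j) + 2) * (2 * ((c : ℚ) + j) + 1) * ((2 * (c + j))! : ℚ) := by
    rw [show 2 * (c + 1 + j) = (2 * (c + j) + 1) + 1 from by omega, Nat.factorial_succ,
      Nat.factorial_succ]
    push_cast; ring
  have r2 : ((c + 2 * j + 3)! : ℚ)
      = ((c : ℚ) + 2 * j + 3) * ((c : ℚ) + 2 * j + 2) * ((c : ℚ) + 2 * j + 1)
        * ((c + 2 * j)! : ℚ) := by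
    rw [show c + 2 * j + 3 = (c + 2 * j + 2) + 1 from by omega, Nat.factorial_succ,
      show c + 2 * j + 2 = (c + 2 * j + 1) + 1 from by omega, Nat.factorial_succ,
      Nat.factorial_succ]
    push_cast; ring
  have r3 : ((c + 2 * j + 1)! : ℚ) = ((c : ℚ) + 2 * j + 1) * ((c + 2 * j)! : ℚ) := by
    rw [Nat.factorial_succ]; push_cast; ring
  have r4 : ((c + 1 + j + 1)! : ℚ)
      = ((c : ℚ) + j + 2) * ((c : ℚ) + j + 1) * ((c + j)! : ℚ) := by
    rw [Nat.factorial_succ, show c + 1 + j = (c + j) + 1 from by omega, Nat.factorial_succ]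
    push_cast; ring
  have r5 : ((c + 1 + j)! : ℚ) = ((c : ℚ) + j + 1) * ((c + j)! : ℚ) := by
    rw [show c + 1 + j = (c + j) + 1 from by omega, Nat.factorial_succ]
    push_cast; ring
  have r6 : ((j + 1)! : ℚ) = ((j : ℚ) + 1) * ((j)! : ℚ) := by
    rw [Nat.factorial_succ]; push_cast; ring
  have hA : ((2 * (c + j))! : ℚ) ≠ 0 := by positivity
  have hB : ((c + 2 * j)! : ℚ) ≠ 0 := by positivity
  have hD : (((c + j))! : ℚ) ≠ 0 := by positivity
  have hE : ((j)! : ℚ) ≠ 0 := by positivity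
  have h1 : (0 : ℚ) < (c : ℚ) + 2 * j + 1 := by positivity
  have h2 : (0 : ℚ) < (c : ℚ) + 2 * j + 3 := by positivity
  have h3 : (0 : ℚ) < (c : ℚ) + j + 1 := by positivity
  have h4 : (0 : ℚ) < (c : ℚ) + j + 2 := by positivity
  have h5 : (0 : ℚ) < 2 * ((c : ℚ) + 1 + j + 1) - (↑c + 1) := by push_cast; linarith
  have h6 : (0 : ℚ) < 2 * ((c : ℚ) + 1 + j) - (↑c + 1) := by push_cast; linarith
  have key : ((2 * (c + j)).choose (c + j) : ℚ) / (↑(c + j) + 1) *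
        (↑(c + 1) / (2 * (↑(c + 1 + j + 1) : ℚ) - ↑(c + 1)) * ↑((c + 2 * j + 3).choose (c + 1 + j + 1))) -
      ((2 * (c + 1 + j)).choose (c + 1 + j) : ℚ) / (↑(c + 1 + j) + 1) *
        (↑(c + 1) / (2 * (↑(c + 1 + j) : ℚ) - ↑(c + 1)) * ↑((c + 2 * j + 1).choose (c + 1 + j))) =
      (↑(c + 1) * (↑(c + 1) - 1) * (↑(c + 1) - 2) * ↑(2 * (c + j))! * ↑(c + 2 * j)!) /
        (↑(c + 1 + j + 1)! * ↑(c + 1 + j)! * ↑(c + j)! * ↑(j + 1)!) := by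
    rw [hch1, hch2, hch3, hch4, r1, r2, r3, r4, r5, r6]
    push_cast
    field_simp
    ring
  refine ⟨key, ?_⟩
  have hnn : (0 : ℚ) ≤ (↑(c + 1) * (↑(c + 1) - 1) * (↑(c + 1) - 2) * ↑(2 * (c + j))! *
      ↑(c + 2 * j)!) / (↑(c + 1 + j + 1)! * ↑(c + 1 + j)! * ↑(c + j)! * ↑(j + 1)!) := by
    apply div_nonneg _ (by positivity)
    have : (0 : ℚ) ≤ (↑(c + 1) : ℚ) * (↑(c + 1) - 1) * (↑(c + 1) - 2) := by
      rcases c with _ | c'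
      · norm_num
      · push_cast
        have hc' : (0 : ℚ) ≤ (c' : ℚ) := Nat.cast_nonneg _
        nlinarith [hc', mul_nonneg hc' hc', mul_nonneg (mul_nonneg hc' hc') hc']
    have h2' : (0 : ℚ) ≤ ((2 * (c + j))! : ℚ) := by positivity
    have h3' : (0 : ℚ) ≤ ((c + 2 * j)! : ℚ) := by positivity
    exact mul_nonneg (mul_nonneg this h2') h3'
  rw [← sub_nonneg, key]
  exact hnn
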